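/- Let φ and Φ be the standard normal density and CDF. Then as v ↑ 1, the density-quantile function satisfies φ(Φ^{-1}(v)) / [(1−v)·√(2 log(1/(1−v)))] → 1. -/

import Mathlib

open MeasureTheory ProbabilityTheory Real Filter

/-- standard normal density -/
noncomputable def stdPDF (x : ℝ) : ℝ := (Real.sqrt (2 * Real.pi))⁻¹ * Real.exp (-(x ^ 2) / 2)

/-- standard normal CDF -/
noncomputable def stdCDF (x : ℝ) : ℝ := ∫ t in Set.Iic x, stdPDF t

noncomputable def stdQ (x : ℝ) : ℝ := ∫ t in Set.Ioi x, stdPDF t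

lemma stdPDF_pos (x : ℝ) : 0 < stdPDF x := by
  have h : 0 < Real.sqrt (2 * Real.pi) := Real.sqrt_pos.2 (by positivity)
  exact mul_pos (inv_pos.2 h) (Real.exp_pos _)

lemma stdPDF_nonneg (x : ℝ) : 0 ≤ stdPDF x := (stdPDF_pos x).le

lemma hasDerivAt_stdPDF (x : ℝ) : HasDerivAt stdPDF (-x * stdPDF x) x := by
  have h1 : HasDerivAt (fun x : ℝ => -(x ^ 2) / 2) (-x) x := by
    have := ((hasDerivAt_pow 2 x).neg).div_const 2
    simpa using this.congr_deriv (by ring)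
  have h2 : HasDerivAt (fun x : ℝ => Real.exp (-(x ^ 2) / 2))
      (Real.exp (-(x ^ 2) / 2) * (-x)) x := h1.exp
  have := h2.const_mul (Real.sqrt (2 * Real.pi))⁻¹
  unfold stdPDF
  exact this.congr_deriv (by ring)

lemma tendsto_stdPDF_atTop : Tendsto stdPDF atTop (nhds 0) := by
  have h1 : Tendsto (fun x : ℝ => -(x ^ 2) / 2) atTop atBot := by
    apply Tendsto.atBot_div_const (by norm_num)
    exact tendsto_neg_atTop_atBot.comp (tendsto_pow_atTop two_ne_zero)
  have := Real.tendsto_exp_atBot.comp h1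
  have h2 := this.const_mul (Real.sqrt (2 * Real.pi))⁻¹
  have h3 : Tendsto stdPDF atTop (nhds ((Real.sqrt (2 * Real.pi))⁻¹ * 0)) := h2
  simpa using h3

lemma integrable_stdPDF : Integrable stdPDF := by
  have h := integrable_exp_neg_mul_sq (b := (1/2 : ℝ)) (by norm_num)
  have := h.const_mul (Real.sqrt (2 * Real.pi))⁻¹
  apply this.congr
  filter_upwards with x
  unfold stdPDF
  ring_nf

lemma integral_stdPDF : ∫ x, stdPDF x = 1 := by
  have h : ∫ x : ℝ, Real.exp (-(1/2 : ℝ) * x ^ 2) = Real.sqrt (Real.pi / (1/2)) :=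
    integral_gaussian (1/2 : ℝ)
  have h2 : ∫ x, stdPDF x = (Real.sqrt (2 * Real.pi))⁻¹ * ∫ x : ℝ, Real.exp (-(1/2 : ℝ) * x ^ 2) := by
    rw [← integral_const_mul]
    congr 1 with x
    unfold stdPDF
    ring_nf
  rw [h2, h]
  have : Real.pi / (1/2) = 2 * Real.pi := by ring
  rw [this, inv_mul_cancel₀]
  exact (Real.sqrt_pos.2 (by positivity)).ne'

lemma stdQ_eq (x : ℝ) : stdQ x = 1 - stdCDF x := by
  have h := integral_add_compl (measurableSet_Iic (a := x)) integrable_stdPDF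
  rw [Set.compl_Iic] at h
  rw [integral_stdPDF] at h
  unfold stdQ stdCDF
  linarith [h]

/-- antiderivative fact: ∫_{Ioi x} t φ(t) dt = φ x for x ≥ 0 -/
lemma integral_id_mul_stdPDF {x : ℝ} (hx : 0 ≤ x) :
    ∫ t in Set.Ioi x, t * stdPDF t = stdPDF x := by
  have hderiv : ∀ t ∈ Set.Ici x, HasDerivAt (fun t => -stdPDF t) (t * stdPDF t) t := by
    intro t _
    simpa using (hasDerivAt_stdPDF t).fun_neg.congr_deriv (by ring)
  have hpos : ∀ t ∈ Set.Ioi x, 0 ≤ t * stdPDF t := fun t ht =>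
    mul_nonneg (le_trans hx (le_of_lt ht)) (stdPDF_nonneg t)
  have htend : Tendsto (fun t => -stdPDF t) atTop (nhds 0) := by
    simpa using tendsto_stdPDF_atTop.neg
  have := integral_Ioi_of_hasDerivAt_of_nonneg' hderiv hpos htend
  simpa using this

lemma integrableOn_id_mul_stdPDF {x : ℝ} (hx : 0 ≤ x) :
    IntegrableOn (fun t => t * stdPDF t) (Set.Ioi x) := by
  have hderiv : ∀ t ∈ Set.Ici x, HasDerivAt (fun t => -stdPDF t) (t * stdPDF t) t := by
    intro t _
    simpa using (hasDerivAt_stdPDF t).fun_neg.congr_deriv (by ring)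
  have hpos : ∀ t ∈ Set.Ioi x, 0 ≤ t * stdPDF t := fun t ht =>
    mul_nonneg (le_trans hx (le_of_lt ht)) (stdPDF_nonneg t)
  have htend : Tendsto (fun t => -stdPDF t) atTop (nhds 0) := by
    simpa using tendsto_stdPDF_atTop.neg
  exact integrableOn_Ioi_deriv_of_nonneg' hderiv hpos htend

/-- upper bound : Q x ≤ φ x / x for x ≥ 1 -/
lemma stdQ_le {x : ℝ} (hx : 1 ≤ x) : stdQ x ≤ stdPDF x / x := by
  have hx0 : 0 < x := lt_of_lt_of_le one_pos hx
  have h1 : stdQ x ≤ ∫ t in Set.Ioi x, (t / x) * stdPDF t := by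
    apply setIntegral_mono_on
    · exact integrable_stdPDF.integrableOn
    · exact IntegrableOn.congr_fun ((integrableOn_id_mul_stdPDF hx0.le).div_const x)
        (fun t _ => by ring) measurableSet_Ioi
    · exact measurableSet_Ioi
    · intro t ht
      have h1t : 1 ≤ t / x := (one_le_div hx0).2 (le_of_lt ht)
      nlinarith [stdPDF_nonneg t]
  have h2 : ∫ t in Set.Ioi x, (t / x) * stdPDF t = stdPDF x / x := by
    have : ∀ t : ℝ, (t / x) * stdPDF t = x⁻¹ * (t * stdPDF t) := fun t => by ring
    simp_rw [this, integral_const_mul, integral_id_mul_stdPDF hx0.le]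
    rw [inv_mul_eq_div]
  linarith [h1, h2.le]

/-- lower bound : (x⁻¹ - x⁻³) φ x ≤ Q x for x ≥ 2 -/
lemma le_stdQ {x : ℝ} (hx : 2 ≤ x) : (x⁻¹ - (x ^ 3)⁻¹) * stdPDF x ≤ stdQ x := by
  have hx0 : 0 < x := lt_of_lt_of_le two_pos hx
  set g : ℝ → ℝ := fun t => -((t⁻¹ - (t ^ 3)⁻¹) * stdPDF t) with hg
  have hderiv : ∀ t ∈ Set.Ici x, HasDerivAt g ((1 - 3 * (t ^ 4)⁻¹) * stdPDF t) t := by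
    intro t ht
    have ht0 : t ≠ 0 := (lt_of_lt_of_le hx0 ht).ne'
    have ha : HasDerivAt (fun t : ℝ => t⁻¹) (-(t ^ 2)⁻¹) t := hasDerivAt_inv ht0
    have hb : HasDerivAt (fun t : ℝ => (t ^ 3)⁻¹)
        ((3 : ℕ) * t⁻¹ ^ (2) * -(t ^ 2)⁻¹) t := by
      have := ha.fun_pow 3
      have heq : (fun t : ℝ => t⁻¹ ^ 3) = fun t : ℝ => (t ^ 3)⁻¹ := by
        funext t; rw [inv_pow]
      rw [heq] at this
      simpa using this
    have h1 := (ha.fun_sub hb).fun_mul (hasDerivAt_stdPDF t)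
    have h2 := h1.fun_neg
    apply h2.congr_deriv
    have e1 : (t:ℝ) ^ 2 ≠ 0 := pow_ne_zero 2 ht0
    field_simp
    ring
  have hpos : ∀ t ∈ Set.Ioi x, 0 ≤ (1 - 3 * (t ^ 4)⁻¹) * stdPDF t := by
    intro t ht
    have ht2 : 2 ≤ t := le_trans hx (le_of_lt ht)
    have h4 : (16 : ℝ) ≤ t ^ 4 := by nlinarith [sq_nonneg t, sq_nonneg (t^2 - 4)]
    have : 3 * (t ^ 4)⁻¹ ≤ 3 / 16 := by
      rw [mul_inv_le_iff₀ (by positivity)]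
      nlinarith
    have := stdPDF_nonneg t
    nlinarith
  have htend : Tendsto g atTop (nhds 0) := by
    have h1 : Tendsto (fun t : ℝ => t⁻¹ - (t ^ 3)⁻¹) atTop (nhds 0) := by
      have hA : Tendsto (fun t : ℝ => t⁻¹) atTop (nhds 0) := tendsto_inv_atTop_zero
      have hB : Tendsto (fun t : ℝ => (t ^ 3)⁻¹) atTop (nhds 0) :=
        tendsto_inv_atTop_zero.comp (tendsto_pow_atTop three_ne_zero)
      simpa using hA.sub hB
    have := (h1.mul tendsto_stdPDF_atTop).neg
    simpa [hg] using this
  have hint := integral_Ioi_of_hasDerivAt_of_nonneg' hderiv hpos htend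
  have hinteg := integrableOn_Ioi_deriv_of_nonneg' hderiv hpos htend
  have h5 : ∫ t in Set.Ioi x, (1 - 3 * (t ^ 4)⁻¹) * stdPDF t = (x⁻¹ - (x ^ 3)⁻¹) * stdPDF x := by
    rw [hint]; simp [hg]
  have h6 : ∫ t in Set.Ioi x, (1 - 3 * (t ^ 4)⁻¹) * stdPDF t ≤ stdQ x := by
    apply setIntegral_mono_on hinteg integrable_stdPDF.integrableOn measurableSet_Ioi
    intro t ht
    have : 0 ≤ 3 * (t ^ 4)⁻¹ := by positivity
    nlinarith [stdPDF_nonneg t]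
  linarith

lemma stdQ_antitone : Antitone stdQ := by
  intro a b hab
  exact setIntegral_mono_set integrable_stdPDF.integrableOn
    (ae_of_all _ stdPDF_nonneg) (Set.Ioi_subset_Ioi hab).eventuallyLE

lemma stdCDF_mono : Monotone stdCDF := by
  intro a b hab
  exact setIntegral_mono_set integrable_stdPDF.integrableOn
    (ae_of_all _ stdPDF_nonneg) (Set.Iic_subset_Iic.2 hab).eventuallyLE

lemma stdQ_pos (x : ℝ) : 0 < stdQ x := by
  set N := max x 2 with hN
  have hN2 : (2:ℝ) ≤ N := le_max_right _ _
  have hxN : x ≤ N := le_max_left _ _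
  have h := le_stdQ hN2
  have hmono : stdQ N ≤ stdQ x := stdQ_antitone hxN
  have hN0 : (0:ℝ) < N := by linarith
  have hNsq : (4:ℝ) ≤ N ^ 2 := by nlinarith
  have hNN : N < N ^ 3 := by nlinarith
  have h3 : (N ^ 3)⁻¹ < N⁻¹ := by
    exact inv_strictAnti₀ hN0 hNN
  have : 0 < (N⁻¹ - (N ^ 3)⁻¹) * stdPDF N := mul_pos (by linarith) (stdPDF_pos N)
  linarith

lemma stdCDF_lt_one (x : ℝ) : stdCDF x < 1 := by
  have := stdQ_pos x
  rw [stdQ_eq] at this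
  linarith

lemma tendsto_aux_log (a : ℝ) :
    Tendsto (fun x : ℝ => (x ^ 2 + a + 2 * Real.log x) / x ^ 2) atTop (nhds 1) := by
  have h1 : Tendsto (fun x : ℝ => Real.log x / x) atTop (nhds 0) :=
    Real.isLittleO_log_id_atTop.tendsto_div_nhds_zero
  have h2 : Tendsto (fun x : ℝ => (x ^ 2)⁻¹) atTop (nhds 0) :=
    tendsto_inv_atTop_zero.comp (tendsto_pow_atTop two_ne_zero)
  have h3 : Tendsto (fun x : ℝ => 1 + a * (x ^ 2)⁻¹ + 2 * (Real.log x / x * x⁻¹))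
      atTop (nhds (1 + a * 0 + 2 * (0 * 0))) := by
    exact (tendsto_const_nhds.add ((h2.const_mul a).congr (fun x => by ring))).add
      (((h1.mul tendsto_inv_atTop_zero)).const_mul 2)
  have h4 : (1 : ℝ) + a * 0 + 2 * (0 * 0) = 1 := by ring
  rw [h4] at h3
  apply h3.congr'
  filter_upwards [eventually_gt_atTop (0:ℝ)] with x hx
  have hx2 : x ^ 2 ≠ 0 := by positivity
  field_simp

lemma tendsto_pdf_div_mul : Tendsto (fun x => stdPDF x / (x * stdQ x)) atTop (nhds 1) := by
  have hupper : Tendsto (fun x : ℝ => (1 - (x ^ 2)⁻¹)⁻¹) atTop (nhds 1) := by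
    have h2 : Tendsto (fun x : ℝ => (x ^ 2)⁻¹) atTop (nhds 0) :=
      tendsto_inv_atTop_zero.comp (tendsto_pow_atTop (n := 2) (by norm_num))
    have := ((tendsto_const_nhds (x := (1:ℝ))).sub h2).inv₀ (by norm_num)
    simpa using this
  apply tendsto_of_tendsto_of_tendsto_of_le_of_le' tendsto_const_nhds hupper
  · filter_upwards [eventually_ge_atTop (2:ℝ)] with x hx
    have hx0 : (0:ℝ) < x := by linarith
    have hQpos : 0 < stdQ x := stdQ_pos x
    have hQu : stdQ x ≤ stdPDF x / x := stdQ_le (by linarith)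
    have hxq : x * stdQ x ≤ stdPDF x := by
      rw [le_div_iff₀ hx0] at hQu
      linarith [hQu]
    exact (one_le_div (mul_pos hx0 hQpos)).2 hxq
  · filter_upwards [eventually_ge_atTop (2:ℝ)] with x hx
    have hx0 : (0:ℝ) < x := by linarith
    have hQl := le_stdQ hx
    have hkey : (1 - (x ^ 2)⁻¹) * stdPDF x ≤ x * stdQ x := by
      have hx2 : x ^ 2 ≠ 0 := by positivity
      have h : x * ((x⁻¹ - (x ^ 3)⁻¹) * stdPDF x) = (1 - (x ^ 2)⁻¹) * stdPDF x := by
        field_simp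
      nlinarith [hQl]
    have hcpos : 0 < (1 - (x ^ 2)⁻¹) * stdPDF x := by
      have : (x ^ 2)⁻¹ ≤ (1:ℝ)/4 := by
        rw [inv_le_iff_one_le_mul₀ (by positivity)]
        nlinarith
      exact mul_pos (by linarith) (stdPDF_pos x)
    calc stdPDF x / (x * stdQ x) ≤ stdPDF x / ((1 - (x ^ 2)⁻¹) * stdPDF x) :=
          div_le_div_of_nonneg_left (stdPDF_nonneg x) hcpos hkey
      _ = (1 - (x ^ 2)⁻¹)⁻¹ := by
          rw [div_mul_eq_div_div_swap, div_self (stdPDF_pos x).ne', one_div]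

lemma log_stdPDF (x : ℝ) :
    Real.log (stdPDF x) = -Real.log (Real.sqrt (2 * Real.pi)) - x ^ 2 / 2 := by
  unfold stdPDF
  rw [Real.log_mul (by positivity) (Real.exp_pos _).ne', Real.log_inv, Real.log_exp]
  ring

lemma tendsto_log_ratio :
    Tendsto (fun x => 2 * Real.log (1 / stdQ x) / x ^ 2) atTop (nhds 1) := by
  set c := Real.log (Real.sqrt (2 * Real.pi)) with hc
  apply tendsto_of_tendsto_of_tendsto_of_le_of_le' (tendsto_aux_log (2 * c))
    (tendsto_aux_log (2 * c + 2 * Real.log 2))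
  · filter_upwards [eventually_ge_atTop (2:ℝ)] with x hx
    -- lower bound : (x² + 2c + 2 log x)/x² ≤ 2 log(1/Q)/x²
    have hx0 : (0:ℝ) < x := by linarith
    have hQpos := stdQ_pos x
    have hQu : stdQ x ≤ stdPDF x / x := stdQ_le (by linarith)
    have hlog : Real.log (stdQ x) ≤ Real.log (stdPDF x / x) :=
      Real.log_le_log hQpos hQu
    rw [Real.log_div (stdPDF_pos x).ne' hx0.ne', log_stdPDF] at hlog
    rw [Real.log_div one_ne_zero hQpos.ne', Real.log_one]
    have hx2 : (0:ℝ) < x ^ 2 := by positivity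
    rw [div_le_div_iff₀ hx2 hx2]
    nlinarith [hlog]
  · filter_upwards [eventually_ge_atTop (2:ℝ)] with x hx
    have hx0 : (0:ℝ) < x := by linarith
    have hQpos := stdQ_pos x
    have hQl := le_stdQ hx
    have hhalf : stdPDF x / (2 * x) ≤ stdQ x := by
      have hx2 : x ^ 2 ≠ 0 := by positivity
      have h : (x⁻¹ - (x ^ 3)⁻¹) * stdPDF x = (1 - (x ^ 2)⁻¹) / x * stdPDF x := by
        field_simp
      have h2 : (x ^ 2)⁻¹ ≤ (1:ℝ)/2 := by
        rw [inv_le_iff_one_le_mul₀ (by positivity)]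
        nlinarith
      have h3 : stdPDF x / (2 * x) ≤ (1 - (x ^ 2)⁻¹) / x * stdPDF x := by
        have hhalf2 : (1:ℝ)/2 ≤ 1 - (x ^ 2)⁻¹ := by linarith
        have he : stdPDF x / (2 * x) = (1/2) / x * stdPDF x := by
          field_simp
        rw [he]
        apply mul_le_mul_of_nonneg_right _ (stdPDF_nonneg x)
        gcongr
      linarith [hQl, h.symm.le, h3]
    have hlog : Real.log (stdPDF x / (2 * x)) ≤ Real.log (stdQ x) :=
      Real.log_le_log (div_pos (stdPDF_pos x) (mul_pos two_pos hx0)) hhalf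
    rw [Real.log_div (stdPDF_pos x).ne' (mul_pos two_pos hx0).ne', log_stdPDF,
      Real.log_mul two_ne_zero hx0.ne'] at hlog
    rw [Real.log_div one_ne_zero hQpos.ne', Real.log_one]
    have hx2 : (0:ℝ) < x ^ 2 := by positivity
    rw [div_le_div_iff₀ hx2 hx2]
    nlinarith [hlog]

lemma two_log_pos {x : ℝ} (hx : 2 ≤ x) : 0 < 2 * Real.log (1 / stdQ x) := by
  have hx0 : (0:ℝ) < x := by linarith
  have hQpos := stdQ_pos x
  have hQu : stdQ x ≤ stdPDF x / x := stdQ_le (by linarith)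
  have hlog : Real.log (stdQ x) ≤ Real.log (stdPDF x / x) :=
    Real.log_le_log hQpos hQu
  rw [Real.log_div (stdPDF_pos x).ne' hx0.ne', log_stdPDF] at hlog
  rw [Real.log_div one_ne_zero hQpos.ne', Real.log_one]
  have hc : 0 ≤ Real.log (Real.sqrt (2 * Real.pi)) := by
    apply Real.log_nonneg
    rw [show (1:ℝ) = Real.sqrt 1 by simp]
    apply Real.sqrt_le_sqrt
    nlinarith [Real.pi_gt_three]
  have hlx : 0 ≤ Real.log x := Real.log_nonneg (by linarith)
  nlinarith [hlog]

lemma tendsto_x_div_sqrt :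
    Tendsto (fun x => x / Real.sqrt (2 * Real.log (1 / stdQ x))) atTop (nhds 1) := by
  have hL := tendsto_log_ratio
  have h1 : Tendsto (fun x => (Real.sqrt (2 * Real.log (1 / stdQ x) / x ^ 2))⁻¹)
      atTop (nhds 1) := by
    have h2 : Tendsto (fun x => Real.sqrt (2 * Real.log (1 / stdQ x) / x ^ 2))
        atTop (nhds (Real.sqrt 1)) :=
      (Real.continuous_sqrt.continuousAt).tendsto.comp hL
    rw [Real.sqrt_one] at h2
    simpa using h2.inv₀ one_ne_zero
  apply h1.congr'
  filter_upwards [eventually_ge_atTop (2:ℝ)] with x hx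
  have hx0 : (0:ℝ) < x := by linarith
  have hA := two_log_pos hx
  rw [Real.sqrt_div hA.le, Real.sqrt_sq hx0.le, inv_div]

lemma tendsto_main :
    Tendsto (fun x => stdPDF x / (stdQ x * Real.sqrt (2 * Real.log (1 / stdQ x))))
      atTop (nhds 1) := by
  have h := tendsto_pdf_div_mul.mul tendsto_x_div_sqrt
  rw [mul_one] at h
  apply h.congr'
  filter_upwards [eventually_ge_atTop (2:ℝ)] with x hx
  have hx0 : (0:ℝ) < x := by linarith
  rw [div_mul_div_comm]
  rw [show x * stdQ x * Real.sqrt (2 * Real.log (1 / stdQ x)) =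
      x * (stdQ x * Real.sqrt (2 * Real.log (1 / stdQ x))) by ring,
    show stdPDF x * x = x * stdPDF x by ring,
    mul_div_mul_left _ _ hx0.ne']

/-- the density-quantile function satisfies
φ(Φ⁻¹(v)) / [(1−v)√(2 log(1/(1−v)))] → 1 as v ↑ 1. -/
theorem stmt_5 (Φinv : ℝ → ℝ) (hΦinv : ∀ v ∈ Set.Ioo (0:ℝ) 1, stdCDF (Φinv v) = v) :
    Tendsto (fun v : ℝ =>
        stdPDF (Φinv v) / ((1 - v) * Real.sqrt (2 * Real.log (1 / (1 - v)))))
      (nhdsWithin 1 (Set.Iio 1)) (nhds 1) := by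
  have h4 : Tendsto Φinv (nhdsWithin 1 (Set.Iio 1)) atTop := by
    rw [tendsto_atTop]
    intro b
    have hb1 : stdCDF b < 1 := stdCDF_lt_one b
    set a := max (stdCDF b) 0 with ha
    have ha1 : a < 1 := max_lt hb1 one_pos
    filter_upwards [Ioo_mem_nhdsLT_of_mem
      (show (1:ℝ) ∈ Set.Ioc a 1 from ⟨ha1, le_refl 1⟩)] with v hv
    have hv01 : v ∈ Set.Ioo (0:ℝ) 1 :=
      ⟨lt_of_le_of_lt (le_max_right _ _) hv.1, hv.2⟩
    by_contra hcon
    push_neg at hcon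
    have hmono := stdCDF_mono hcon.le
    rw [hΦinv v hv01] at hmono
    have : v ≤ a := le_trans hmono (le_max_left _ _)
    linarith [hv.1]
  have h3 := tendsto_main.comp h4
  apply h3.congr'
  filter_upwards [Ioo_mem_nhdsLT_of_mem
    (show (1:ℝ) ∈ Set.Ioc 0 1 from ⟨one_pos, le_refl 1⟩)] with v hv
  have hkey : stdQ (Φinv v) = 1 - v := by
    rw [stdQ_eq, hΦinv v hv]
  simp only [Function.comp]
  rw [hkey]
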